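/- Let B > 0 and let f be continuous on [0,B]. Then the function H(ξ) = ∫₀^B max(ξ−u,0) · ( ∫₀^B max(x−u,0)·f(x) dx ) du, i.e. H = γ*γ f, is four times differentiable on (0,B) and its fourth derivative satisfies H⁗(ξ) = f(ξ) for all ξ ∈ (0,B). The same holds for γγ* f. -/

import Mathlib

open MeasureTheory Set

private lemma ftc_right {B : ℝ} {h : ℝ → ℝ} (hh : ContinuousOn h (Icc 0 B))
    {ξ : ℝ} (hξ : ξ ∈ Ioo (0:ℝ) B) :
    HasDerivAt (fun t => ∫ u in (0:ℝ)..t, h u) (h ξ) ξ := by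
  have hint : IntervalIntegrable h volume 0 ξ := by
    apply ContinuousOn.intervalIntegrable
    rw [uIcc_of_le hξ.1.le]
    exact hh.mono (Icc_subset_Icc le_rfl hξ.2.le)
  have hcontOn : ContinuousOn h (Ioo 0 B) := hh.mono Ioo_subset_Icc_self
  have hmeas := hcontOn.stronglyMeasurableAtFilter (μ := volume) isOpen_Ioo ξ hξ
  have hcont : ContinuousAt h ξ := hcontOn.continuousAt (isOpen_Ioo.mem_nhds hξ)
  exact intervalIntegral.integral_hasDerivAt_right hint hmeas hcont

private lemma ftc_left {B : ℝ} {h : ℝ → ℝ} (hh : ContinuousOn h (Icc 0 B))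
    {ξ : ℝ} (hξ : ξ ∈ Ioo (0:ℝ) B) :
    HasDerivAt (fun t => ∫ u in t..B, h u) (-h ξ) ξ := by
  have hint : IntervalIntegrable h volume ξ B := by
    apply ContinuousOn.intervalIntegrable
    rw [uIcc_of_le hξ.2.le]
    exact hh.mono (Icc_subset_Icc hξ.1.le le_rfl)
  have hcontOn : ContinuousOn h (Ioo 0 B) := hh.mono Ioo_subset_Icc_self
  have hmeas := hcontOn.stronglyMeasurableAtFilter (μ := volume) isOpen_Ioo ξ hξ
  have hcont : ContinuousAt h ξ := hcontOn.continuousAt (isOpen_Ioo.mem_nhds hξ)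
  exact intervalIntegral.integral_hasDerivAt_left hint hmeas hcont

/-- Splitting the "call" integral. -/
private lemma split_call {B : ℝ} {h : ℝ → ℝ} (hh : ContinuousOn h (Icc 0 B))
    {t : ℝ} (ht : t ∈ Icc (0:ℝ) B) :
    (∫ u in (0:ℝ)..B, max (t - u) 0 * h u)
      = t * (∫ u in (0:ℝ)..t, h u) - ∫ u in (0:ℝ)..t, u * h u := by
  have hcont : ContinuousOn (fun u => max (t - u) 0 * h u) (Icc 0 B) :=
    (((continuous_const.sub continuous_id).max continuous_const).continuousOn).mul hh
  have h0t : IntervalIntegrable (fun u => max (t - u) 0 * h u) volume 0 t := by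
    apply ContinuousOn.intervalIntegrable
    rw [uIcc_of_le ht.1]
    exact hcont.mono (Icc_subset_Icc le_rfl ht.2)
  have htB : IntervalIntegrable (fun u => max (t - u) 0 * h u) volume t B := by
    apply ContinuousOn.intervalIntegrable
    rw [uIcc_of_le ht.2]
    exact hcont.mono (Icc_subset_Icc ht.1 le_rfl)
  rw [← intervalIntegral.integral_add_adjacent_intervals h0t htB]
  have h2 : (∫ u in t..B, max (t - u) 0 * h u) = ∫ u in t..B, (0:ℝ) := by
    apply intervalIntegral.integral_congr
    intro u hu
    rw [uIcc_of_le ht.2] at hu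
    have : t - u ≤ 0 := by linarith [hu.1]
    simp [max_eq_right this]
  have h1 : (∫ u in (0:ℝ)..t, max (t - u) 0 * h u)
      = ∫ u in (0:ℝ)..t, (t * h u - u * h u) := by
    apply intervalIntegral.integral_congr
    intro u hu
    rw [uIcc_of_le ht.1] at hu
    have : (0:ℝ) ≤ t - u := by linarith [hu.2]
    simp only [max_eq_left this]; ring
  rw [h1, h2]
  have hhint : IntervalIntegrable h volume 0 t := by
    apply ContinuousOn.intervalIntegrable
    rw [uIcc_of_le ht.1]
    exact hh.mono (Icc_subset_Icc le_rfl ht.2)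
  have huhint : IntervalIntegrable (fun u => u * h u) volume 0 t := by
    apply ContinuousOn.intervalIntegrable
    rw [uIcc_of_le ht.1]
    exact (continuousOn_id.mul (hh.mono (Icc_subset_Icc le_rfl ht.2)))
  rw [intervalIntegral.integral_sub (hhint.const_mul t) huhint,
    intervalIntegral.integral_const_mul]
  simp

/-- Splitting the "put" integral. -/
private lemma split_put {B : ℝ} {h : ℝ → ℝ} (hh : ContinuousOn h (Icc 0 B))
    {t : ℝ} (ht : t ∈ Icc (0:ℝ) B) :
    (∫ u in (0:ℝ)..B, max (u - t) 0 * h u)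
      = (∫ u in t..B, u * h u) - t * ∫ u in t..B, h u := by
  have hcont : ContinuousOn (fun u => max (u - t) 0 * h u) (Icc 0 B) :=
    (((continuous_id.sub continuous_const).max continuous_const).continuousOn).mul hh
  have h0t : IntervalIntegrable (fun u => max (u - t) 0 * h u) volume 0 t := by
    apply ContinuousOn.intervalIntegrable
    rw [uIcc_of_le ht.1]
    exact hcont.mono (Icc_subset_Icc le_rfl ht.2)
  have htB : IntervalIntegrable (fun u => max (u - t) 0 * h u) volume t B := by
    apply ContinuousOn.intervalIntegrable
    rw [uIcc_of_le ht.2]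
    exact hcont.mono (Icc_subset_Icc ht.1 le_rfl)
  rw [← intervalIntegral.integral_add_adjacent_intervals h0t htB]
  have h1 : (∫ u in (0:ℝ)..t, max (u - t) 0 * h u) = ∫ u in (0:ℝ)..t, (0:ℝ) := by
    apply intervalIntegral.integral_congr
    intro u hu
    rw [uIcc_of_le ht.1] at hu
    have : u - t ≤ 0 := by linarith [hu.2]
    simp [max_eq_right this]
  have h2 : (∫ u in t..B, max (u - t) 0 * h u)
      = ∫ u in t..B, (u * h u - t * h u) := by
    apply intervalIntegral.integral_congr
    intro u hu
    rw [uIcc_of_le ht.2] at hu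
    have : (0:ℝ) ≤ u - t := by linarith [hu.1]
    simp only [max_eq_left this]; ring
  rw [h1, h2]
  have hhint : IntervalIntegrable h volume t B := by
    apply ContinuousOn.intervalIntegrable
    rw [uIcc_of_le ht.2]
    exact hh.mono (Icc_subset_Icc ht.1 le_rfl)
  have huhint : IntervalIntegrable (fun u => u * h u) volume t B := by
    apply ContinuousOn.intervalIntegrable
    rw [uIcc_of_le ht.2]
    exact (continuousOn_id.mul (hh.mono (Icc_subset_Icc ht.1 le_rfl)))
  rw [intervalIntegral.integral_sub huhint (hhint.const_mul t),
    intervalIntegral.integral_const_mul]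
  simp

/-- Derivative of the call transform. -/
private lemma key_call {B : ℝ} {g : ℝ → ℝ} (hg : ContinuousOn g (Icc 0 B))
    {ξ : ℝ} (hξ : ξ ∈ Ioo (0:ℝ) B) :
    HasDerivAt (fun t => ∫ u in (0:ℝ)..B, max (t - u) 0 * g u)
      (∫ u in (0:ℝ)..ξ, g u) ξ := by
  have hug : ContinuousOn (fun u => u * g u) (Icc 0 B) := continuousOn_id.mul hg
  have hd1 : HasDerivAt (fun t => ∫ u in (0:ℝ)..t, g u) (g ξ) ξ := ftc_right hg hξ
  have hd2 : HasDerivAt (fun t => ∫ u in (0:ℝ)..t, u * g u) (ξ * g ξ) ξ :=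
    ftc_right hug hξ
  have hdF : HasDerivAt
      (fun t => t * (∫ u in (0:ℝ)..t, g u) - ∫ u in (0:ℝ)..t, u * g u)
      (∫ u in (0:ℝ)..ξ, g u) ξ := by
    have := ((hasDerivAt_id ξ).mul hd1).sub hd2
    refine this.congr_deriv ?_
    simp only [id_eq]; ring
  apply hdF.congr_of_eventuallyEq
  filter_upwards [isOpen_Ioo.mem_nhds hξ] with t ht
  exact split_call hg ⟨ht.1.le, ht.2.le⟩

/-- Derivative of the put transform. -/
private lemma key_put {B : ℝ} {g : ℝ → ℝ} (hg : ContinuousOn g (Icc 0 B))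
    {ξ : ℝ} (hξ : ξ ∈ Ioo (0:ℝ) B) :
    HasDerivAt (fun t => ∫ u in (0:ℝ)..B, max (u - t) 0 * g u)
      (-∫ u in ξ..B, g u) ξ := by
  have hug : ContinuousOn (fun u => u * g u) (Icc 0 B) := continuousOn_id.mul hg
  have hd1 : HasDerivAt (fun t => ∫ u in t..B, g u) (-g ξ) ξ := ftc_left hg hξ
  have hd2 : HasDerivAt (fun t => ∫ u in t..B, u * g u) (-(ξ * g ξ)) ξ :=
    ftc_left hug hξ
  have hdF : HasDerivAt
      (fun t => (∫ u in t..B, u * g u) - t * ∫ u in t..B, g u)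
      (-∫ u in ξ..B, g u) ξ := by
    have := hd2.sub ((hasDerivAt_id ξ).mul hd1)
    refine this.congr_deriv ?_
    simp only [id_eq]; ring
  apply hdF.congr_of_eventuallyEq
  filter_upwards [isOpen_Ioo.mem_nhds hξ] with t ht
  exact split_put hg ⟨ht.1.le, ht.2.le⟩

theorem stmt_4 (B : ℝ) (hB : 0 < B) (f : ℝ → ℝ)
    (hf : ContinuousOn f (Icc (0:ℝ) B)) :
    (∃ H₁ H₂ H₃ : ℝ → ℝ, ∀ ξ ∈ Ioo (0:ℝ) B,
      HasDerivAt (fun t => ∫ u in (0:ℝ)..B,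
          max (t - u) 0 * ∫ x in (0:ℝ)..B, max (x - u) 0 * f x) (H₁ ξ) ξ ∧
      HasDerivAt H₁ (H₂ ξ) ξ ∧ HasDerivAt H₂ (H₃ ξ) ξ ∧ HasDerivAt H₃ (f ξ) ξ) ∧
    (∃ K₁ K₂ K₃ : ℝ → ℝ, ∀ ξ ∈ Ioo (0:ℝ) B,
      HasDerivAt (fun t => ∫ u in (0:ℝ)..B,
          max (u - t) 0 * ∫ x in (0:ℝ)..B, max (u - x) 0 * f x) (K₁ ξ) ξ ∧
      HasDerivAt K₁ (K₂ ξ) ξ ∧ HasDerivAt K₂ (K₃ ξ) ξ ∧ HasDerivAt K₃ (f ξ) ξ) := by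
  have hIcc : uIcc (0:ℝ) B = Icc 0 B := uIcc_of_le hB.le
  have hxf : ContinuousOn (fun x => x * f x) (Icc 0 B) := continuousOn_id.mul hf
  -- integrability on [0,B]
  have hfInt : IntegrableOn f (uIcc (0:ℝ) B) volume := by
    rw [hIcc]; exact hf.integrableOn_Icc
  have hxfInt : IntegrableOn (fun x => x * f x) (uIcc (0:ℝ) B) volume := by
    rw [hIcc]; exact hxf.integrableOn_Icc
  constructor
  · -- γ*γ case
    set g : ℝ → ℝ := fun u => ∫ x in (0:ℝ)..B, max (x - u) 0 * f x with hgdef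
    set G : ℝ → ℝ := fun u => (∫ x in u..B, x * f x) - u * ∫ x in u..B, f x with hGdef
    have hgG : EqOn g G (Icc 0 B) := fun u hu => split_put hf hu
    have hGcont : ContinuousOn G (Icc 0 B) := by
      rw [hGdef, ← hIcc]
      exact (intervalIntegral.continuousOn_primitive_interval_left hxfInt).sub
        (continuousOn_id.mul (intervalIntegral.continuousOn_primitive_interval_left hfInt))
    have hgcont : ContinuousOn g (Icc 0 B) := hGcont.congr hgG
    refine ⟨fun ξ => ∫ u in (0:ℝ)..ξ, g u, g, fun ξ => -∫ x in ξ..B, f x,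
      fun ξ hξ => ⟨key_call hgcont hξ, ftc_right hgcont hξ, ?_, ?_⟩⟩
    · -- g has derivative -∫_ξ^B f
      have hdG : HasDerivAt G (-∫ x in ξ..B, f x) ξ := by
        have hA : HasDerivAt (fun t => ∫ x in t..B, x * f x) (-(ξ * f ξ)) ξ :=
          ftc_left hxf hξ
        have hC : HasDerivAt (fun t => ∫ x in t..B, f x) (-f ξ) ξ := ftc_left hf hξ
        have := hA.sub ((hasDerivAt_id ξ).mul hC)
        refine this.congr_deriv ?_
        simp only [id_eq]; ring
      apply hdG.congr_of_eventuallyEq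
      filter_upwards [isOpen_Ioo.mem_nhds hξ] with t ht
      exact hgG ⟨ht.1.le, ht.2.le⟩
    · have := (ftc_left hf hξ).neg
      simpa [Pi.neg_def] using this
  · -- γγ* case
    set k : ℝ → ℝ := fun u => ∫ x in (0:ℝ)..B, max (u - x) 0 * f x with hkdef
    set K : ℝ → ℝ := fun u => u * (∫ x in (0:ℝ)..u, f x) - ∫ x in (0:ℝ)..u, x * f x
      with hKdef
    have hkK : EqOn k K (Icc 0 B) := fun u hu => split_call hf hu
    have hKcont : ContinuousOn K (Icc 0 B) := by
      rw [hKdef, ← hIcc]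
      exact (continuousOn_id.mul (intervalIntegral.continuousOn_primitive_interval hfInt)).sub
        (intervalIntegral.continuousOn_primitive_interval hxfInt)
    have hkcont : ContinuousOn k (Icc 0 B) := hKcont.congr hkK
    refine ⟨fun ξ => -∫ u in ξ..B, k u, k, fun ξ => ∫ x in (0:ℝ)..ξ, f x,
      fun ξ hξ => ⟨key_put hkcont hξ, ?_, ?_, ftc_right hf hξ⟩⟩
    · have := (ftc_left hkcont hξ).neg
      simpa [Pi.neg_def] using this
    · have hdK : HasDerivAt K (∫ x in (0:ℝ)..ξ, f x) ξ := by
        have hC : HasDerivAt (fun t => ∫ x in (0:ℝ)..t, f x) (f ξ) ξ := ftc_right hf hξ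
        have hA : HasDerivAt (fun t => ∫ x in (0:ℝ)..t, x * f x) (ξ * f ξ) ξ :=
          ftc_right hxf hξ
        have := ((hasDerivAt_id ξ).mul hC).sub hA
        refine this.congr_deriv ?_
        simp only [id_eq]; ring
      apply hdK.congr_of_eventuallyEq
      filter_upwards [isOpen_Ioo.mem_nhds hξ] with t ht
      exact hkK ⟨ht.1.le, ht.2.le⟩
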